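/- Let μ be the uniform probability measure on the unit sphere S² ⊂ ℝ³ and let 0 < κ < 1. Then ∫_{S²} Ibin(κ·|n₃|) dμ(n) = ((1+κ)²·ln(1+κ) − (1−κ)²·ln(1−κ) − 2κ)/(4κ·ln 2), where n₃ is the third coordinate of n. -/

import Mathlib

open MeasureTheory Matrix

/-- Euclidean norm of a vector in ℝ³. -/
noncomputable def enorm3 (v : Fin 3 → ℝ) : ℝ := Real.sqrt (v 0 ^ 2 + v 1 ^ 2 + v 2 ^ 2)

/-- Euclidean inner product on ℝ³. -/
def dot3 (v w : Fin 3 → ℝ) : ℝ := v 0 * w 0 + v 1 * w 1 + v 2 * w 2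

/-- `μ` is the uniform (rotation-invariant) probability measure on the unit sphere
`S² = {v ∈ ℝ³ : |v| = 1}`: it is a probability measure, it gives full measure to the
sphere, and it is invariant under every orthogonal transformation of ℝ³. -/
def IsUniformSphereMeasure (μ : Measure (Fin 3 → ℝ)) : Prop :=
  IsProbabilityMeasure μ ∧
  μ {v | v 0 ^ 2 + v 1 ^ 2 + v 2 ^ 2 ≠ 1} = 0 ∧
  ∀ O : Matrix (Fin 3) (Fin 3) ℝ, O * Oᵀ = 1 → μ.map (Matrix.mulVec O) = μ


/-- The binary mutual information `Ibin(x) = ((1+x)·log₂(1+x) + (1−x)·log₂(1−x))/2`. -/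
noncomputable def Ibin (x : ℝ) : ℝ :=
  ((1 + x) * Real.logb 2 (1 + x) + (1 - x) * Real.logb 2 (1 - x)) / 2


lemma ibin_hasSum {y : ℝ} (hy : |y| < 1) :
    HasSum (fun m : ℕ => y ^ (2 * (m + 1)) / ((m + 1) * (2 * m + 1)))
      ((1 + y) * Real.log (1 + y) + (1 - y) * Real.log (1 - y)) := by
  have hy2 : |y ^ 2| < 1 := by
    rw [abs_pow, ← one_pow 2]; exact pow_lt_pow_left₀ hy (abs_nonneg y) (by norm_num) |>.trans_le (by norm_num)
  have h1 := (Real.hasSum_log_sub_log_of_abs_lt_one hy).mul_left y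
  have h2 := Real.hasSum_pow_div_log_of_abs_lt_one hy2
  have h3 := h1.sub h2
  have hfun : (fun m : ℕ => y * (2 * (1 / (2 * (m:ℝ) + 1)) * y ^ (2 * m + 1)) - (y ^ 2) ^ (m + 1) / ((m:ℝ) + 1))
      = fun m : ℕ => y ^ (2 * (m + 1)) / ((m + 1) * (2 * m + 1)) := by
    funext m
    have h1 : ((2:ℝ) * m + 1) ≠ 0 := by positivity
    have h2 : ((m:ℝ) + 1) ≠ 0 := by positivity
    rw [← pow_mul]
    field_simp
    ring
  rw [hfun] at h3
  suffices hs : (1 + y) * Real.log (1 + y) + (1 - y) * Real.log (1 - y) = y * (Real.log (1 + y) - Real.log (1 - y)) - -Real.log (1 - y ^ 2) by rw [hs]; exact h3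
  have ha : (0:ℝ) < 1 + y := by cases abs_lt.1 hy; linarith
  have hb : (0:ℝ) < 1 - y := by cases abs_lt.1 hy; linarith
  have : (1:ℝ) - y ^ 2 = (1 + y) * (1 - y) := by ring
  rw [this, Real.log_mul ha.ne' hb.ne']
  ring

lemma series_value {κ : ℝ} (hκ0 : 0 < κ) (hκ1 : κ < 1) :
    HasSum (fun m : ℕ => κ ^ (2 * (m + 1)) / ((m + 1) * (2 * m + 1) * (2 * m + 3)))
      (((1 + κ) ^ 2 * Real.log (1 + κ) - (1 - κ) ^ 2 * Real.log (1 - κ) - 2 * κ) / (2 * κ)) := by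
  have hκ : |κ| < 1 := by rw [abs_of_pos hκ0]; exact hκ1
  have hκ2 : |κ ^ 2| < 1 := by
    rw [abs_of_pos (by positivity)]; nlinarith
  set L := Real.log (1 + κ) - Real.log (1 - κ) with hL
  have h1 := Real.hasSum_log_sub_log_of_abs_lt_one hκ
  have hS1 := h1.mul_left κ
  have hshift : HasSum (fun n : ℕ => (2:ℝ) * (1 / (2 * (n+1:ℕ) + 1)) * κ ^ (2 * (n+1:ℕ) + 1)) (L - 2 * κ) := by
    refine (hasSum_nat_add_iff (f := fun k : ℕ => (2:ℝ) * (1 / (2 * (k:ℝ) + 1)) * κ ^ (2 * k + 1)) 1).mpr ?_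
    simpa using h1
  have hS3 := hshift.mul_left κ⁻¹
  have hS2 := Real.hasSum_pow_div_log_of_abs_lt_one hκ2
  have h := ((hS1.mul_left (1/2)).add (hS3.mul_left (1/2))).sub hS2
  have hfun : (fun m : ℕ => 1/2 * (κ * (2 * (1 / (2 * (m:ℝ) + 1)) * κ ^ (2 * m + 1)))
        + 1/2 * (κ⁻¹ * (2 * (1 / (2 * ((m:ℕ)+1:ℕ) + 1)) * κ ^ (2 * ((m:ℕ)+1:ℕ) + 1)))
        - (κ ^ 2) ^ (m + 1) / ((m:ℝ) + 1))
      = fun m : ℕ => κ ^ (2 * (m + 1)) / ((m + 1) * (2 * m + 1) * (2 * m + 3)) := by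
    funext m
    have e1 : ((2:ℝ) * m + 1) ≠ 0 := by positivity
    have e2 : ((m:ℝ) + 1) ≠ 0 := by positivity
    have e3 : ((2:ℝ) * m + 3) ≠ 0 := by positivity
    have e4 : (κ:ℝ) ≠ 0 := hκ0.ne'
    push_cast
    rw [← pow_mul]
    field_simp
    ring
  rw [hfun] at h
  suffices hs : ((1 + κ) ^ 2 * Real.log (1 + κ) - (1 - κ) ^ 2 * Real.log (1 - κ) - 2 * κ) / (2 * κ) = 1 / 2 * (κ * (Real.log (1 + κ) - Real.log (1 - κ))) + 1 / 2 * (κ⁻¹ * (L - 2 * κ)) - -Real.log (1 - κ ^ 2) by rw [hs]; exact h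
  have ha : (0:ℝ) < 1 + κ := by linarith
  have hb : (0:ℝ) < 1 - κ := by linarith
  have hc : (1:ℝ) - κ ^ 2 = (1 + κ) * (1 - κ) := by ring
  rw [hc, Real.log_mul ha.ne' hb.ne', hL]
  field_simp
  ring

section aux
variable {μ : Measure (Fin 3 → ℝ)}

lemma measurable_mulVec3 (O : Matrix (Fin 3) (Fin 3) ℝ) : Measurable (Matrix.mulVec O) := by
  apply measurable_pi_lambda
  intro i
  simp only [Matrix.mulVec, dotProduct]
  exact Finset.measurable_sum _ fun j _ => (measurable_pi_apply j).const_mul _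

lemma inv_integral (hμ : IsUniformSphereMeasure μ) {O : Matrix (Fin 3) (Fin 3) ℝ}
    (hO : O * Oᵀ = 1) (g : (Fin 3 → ℝ) → ℝ) (hg : Measurable g) :
    ∫ n, g (O.mulVec n) ∂μ = ∫ n, g n ∂μ := by
  conv_rhs => rw [← hμ.2.2 O hO]
  rw [integral_map (measurable_mulVec3 O).aemeasurable hg.aestronglyMeasurable]

lemma ae_sphere (hμ : IsUniformSphereMeasure μ) :
    ∀ᵐ n ∂μ, n 0 ^ 2 + n 1 ^ 2 + n 2 ^ 2 = 1 := by
  rw [ae_iff]; exact hμ.2.1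

lemma ae_bound (hμ : IsUniformSphereMeasure μ) :
    ∀ᵐ n ∂μ, |n 0| ≤ 1 ∧ |n 1| ≤ 1 ∧ |n 2| ≤ 1 := by
  filter_upwards [ae_sphere hμ] with n h
  refine ⟨abs_le.2 ⟨by nlinarith [sq_nonneg (n 0), sq_nonneg (n 1), sq_nonneg (n 2)], by nlinarith [sq_nonneg (n 0), sq_nonneg (n 1), sq_nonneg (n 2)]⟩,
    abs_le.2 ⟨by nlinarith [sq_nonneg (n 0), sq_nonneg (n 1), sq_nonneg (n 2)], by nlinarith [sq_nonneg (n 0), sq_nonneg (n 1), sq_nonneg (n 2)]⟩,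
    abs_le.2 ⟨by nlinarith [sq_nonneg (n 0), sq_nonneg (n 1), sq_nonneg (n 2)], by nlinarith [sq_nonneg (n 0), sq_nonneg (n 1), sq_nonneg (n 2)]⟩⟩

lemma meas_mon (i j : ℕ) (l : Fin 3) : Measurable (fun n : Fin 3 → ℝ => (n 2)^i * (n l)^j) :=
  ((measurable_pi_apply 2).pow_const i).mul ((measurable_pi_apply l).pow_const j)

lemma integrable_mon (hμ : IsUniformSphereMeasure μ) (i j : ℕ) (l : Fin 3) :
    Integrable (fun n => (n 2)^i * (n l)^j) μ := by
  have : IsProbabilityMeasure μ := hμ.1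
  refine (integrable_const (1:ℝ)).mono' (meas_mon i j l).aestronglyMeasurable ?_
  filter_upwards [ae_bound hμ] with n hn
  have h2 : |n 2| ≤ 1 := hn.2.2
  have hl : |n l| ≤ 1 := by fin_cases l <;> [exact hn.1; exact hn.2.1; exact hn.2.2]
  rw [Real.norm_eq_abs, abs_mul, abs_pow, abs_pow]
  calc |n 2| ^ i * |n l| ^ j ≤ 1 ^ i * 1 ^ j := by
        have := abs_nonneg (n 2); have := abs_nonneg (n l); gcongr
    _ = 1 := by norm_num

end aux

noncomputable def rotO (t : ℝ) : Matrix (Fin 3) (Fin 3) ℝ :=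
  Matrix.of ![![Real.cos t, 0, Real.sin t], ![0,1,0], ![-Real.sin t, 0, Real.cos t]]

lemma rotO_orth (t : ℝ) : rotO t * (rotO t)ᵀ = 1 := by
  have h := Real.sin_sq_add_cos_sq t
  ext i j
  fin_cases i <;> fin_cases j <;>
    simp [rotO, Matrix.mul_apply, Fin.sum_univ_three, Matrix.one_apply, Matrix.transpose_apply, Matrix.vecHead, Matrix.vecTail] <;> nlinarith [h]

lemma rotO_mulVec (t : ℝ) (n : Fin 3 → ℝ) :
    (rotO t).mulVec n 2 = Real.cos t * n 2 - Real.sin t * n 0 := by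
  simp [rotO, Matrix.mulVec, dotProduct, Fin.sum_univ_three, Matrix.vecHead, Matrix.vecTail]
  ring

def reflO : Matrix (Fin 3) (Fin 3) ℝ := Matrix.of ![![-1,0,0],![0,1,0],![0,0,1]]

lemma reflO_orth : reflO * reflOᵀ = 1 := by
  ext i j
  fin_cases i <;> fin_cases j <;>
    simp [reflO, Matrix.mul_apply, Fin.sum_univ_three, Matrix.one_apply, Matrix.transpose_apply, Matrix.vecHead, Matrix.vecTail]

lemma reflO_mulVec (n : Fin 3 → ℝ) :
    reflO.mulVec n 0 = -(n 0) ∧ reflO.mulVec n 2 = n 2 := by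
  constructor <;> simp [reflO, Matrix.mulVec, dotProduct, Fin.sum_univ_three, Matrix.vecHead, Matrix.vecTail]

def swapO : Matrix (Fin 3) (Fin 3) ℝ := Matrix.of ![![0,1,0],![1,0,0],![0,0,1]]

lemma swapO_orth : swapO * swapOᵀ = 1 := by
  ext i j
  fin_cases i <;> fin_cases j <;>
    simp [swapO, Matrix.mul_apply, Fin.sum_univ_three, Matrix.one_apply, Matrix.transpose_apply, Matrix.vecHead, Matrix.vecTail]

lemma swapO_mulVec (n : Fin 3 → ℝ) :
    swapO.mulVec n 0 = n 1 ∧ swapO.mulVec n 2 = n 2 := by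
  constructor <;> simp [swapO, Matrix.mulVec, dotProduct, Fin.sum_univ_three, Matrix.vecHead, Matrix.vecTail]

section moments
variable {μ : Measure (Fin 3 → ℝ)}

/-- odd moments in the first coordinate vanish -/
lemma odd_vanish (hμ : IsUniformSphereMeasure μ) (i j : ℕ) (hj : Odd j) :
    ∫ n, (n 2)^i * (n 0)^j ∂μ = 0 := by
  have h := inv_integral hμ reflO_orth _ (meas_mon i j 0)
  have h2 : ∀ n : Fin 3 → ℝ, ((reflO.mulVec n) 2)^i * ((reflO.mulVec n) 0)^j
      = -((n 2)^i * (n 0)^j) := by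
    intro n
    rw [(reflO_mulVec n).1, (reflO_mulVec n).2, hj.neg_pow]
    ring
  simp only [h2] at h
  rw [integral_neg] at h
  linarith [h]

/-- swap symmetry -/
lemma swap_eq (hμ : IsUniformSphereMeasure μ) (i j : ℕ) :
    ∫ n, (n 2)^i * (n 1)^j ∂μ = ∫ n, (n 2)^i * (n 0)^j ∂μ := by
  have h := inv_integral hμ swapO_orth _ (meas_mon i j 0)
  have h2 : ∀ n : Fin 3 → ℝ, ((swapO.mulVec n) 2)^i * ((swapO.mulVec n) 0)^j
      = (n 2)^i * (n 1)^j := by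
    intro n; rw [(swapO_mulVec n).1, (swapO_mulVec n).2]
  simp only [h2] at h
  exact h

end moments

lemma sum_pair (f : ℕ → ℝ) (n : ℕ) :
    ∑ i ∈ Finset.range (2*n), f i = ∑ j ∈ Finset.range n, (f (2*j) + f (2*j+1)) := by
  induction n with
  | zero => simp
  | succ n ih =>
    rw [Finset.sum_range_succ, ← ih, show 2*(n+1) = (2*n+1)+1 by ring,
      Finset.sum_range_succ, Finset.sum_range_succ]
    ring

lemma sum_pair' (f : ℕ → ℝ) (n : ℕ) :
    ∑ i ∈ Finset.range (2*n+1), f i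
      = (∑ j ∈ Finset.range n, (f (2*j) + f (2*j+1))) + f (2*n) := by
  rw [Finset.sum_range_succ, sum_pair]

open Polynomial in
lemma key_relation {μ : Measure (Fin 3 → ℝ)} (hμ : IsUniformSphereMeasure μ) (k : ℕ) :
    ∫ n, (n 2)^(2*(k+1)) ∂μ = (2*(k:ℝ)+1) * ∫ n, (n 2)^(2*k) * (n 0)^2 ∂μ := by
  set K := k + 1 with hKdef
  set m : ℕ → ℝ := fun i => ∫ n, (n 2)^i * (n 0)^(2*K - i) ∂μ with hm
  set aK : ℝ := ∫ n, (n 2)^(2*K) ∂μ with haK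
  -- step 1: expansion identity
  have h_exp : ∀ t : ℝ, ∑ i ∈ Finset.range (2*K+1),
      ((Real.cos t)^i * (-Real.sin t)^(2*K-i) * ((2*K).choose i : ℝ)) * m i = aK := by
    intro t
    have hinv := inv_integral hμ (rotO_orth t) (fun v => (v 2)^(2*K))
      ((measurable_pi_apply 2).pow_const _)
    simp only [rotO_mulVec] at hinv
    have hexp' : ∀ n : Fin 3 → ℝ, (Real.cos t * n 2 - Real.sin t * n 0)^(2*K)
        = ∑ i ∈ Finset.range (2*K+1),
          ((Real.cos t)^i * (-Real.sin t)^(2*K-i) * ((2*K).choose i : ℝ))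
            * ((n 2)^i * (n 0)^(2*K-i)) := by
      intro n
      rw [sub_eq_add_neg, add_pow]
      refine Finset.sum_congr rfl fun i _ => ?_
      rw [show -(Real.sin t * n 0) = (-Real.sin t) * n 0 by ring, mul_pow, mul_pow]
      ring
    rw [haK, ← hinv]
    simp_rw [hexp']
    rw [integral_finset_sum _ (fun i _ => ((integrable_mon hμ i (2*K-i) 0).const_mul _))]
    exact Finset.sum_congr rfl fun i _ => (integral_const_mul _ _).symm
  -- step 2: odd vanishing
  have hodd : ∀ j : ℕ, 2*j+1 ≤ 2*K → m (2*j+1) = 0 := by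
    intro j hj
    exact odd_vanish hμ _ _ (Nat.Even.sub_odd hj (even_two_mul K) (odd_two_mul_add_one j))
  -- the polynomial
  set P : Polynomial ℝ := (∑ j ∈ Finset.range (K+1),
      Polynomial.C (((2*K).choose (2*j) : ℝ) * m (2*j)) * (X^(2*j) * (1 - X^2)^(K-j)))
      - Polynomial.C aK with hP
  have hroot : ∀ c ∈ Set.Icc (-1:ℝ) 1, P.eval c = 0 := by
    intro c hc
    have hcos : Real.cos (Real.arccos c) = c := Real.cos_arccos hc.1 hc.2
    have h := h_exp (Real.arccos c)
    set t := Real.arccos c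
    rw [sum_pair'] at h
    have hzero : ∀ j ∈ Finset.range K,
        ((Real.cos t)^(2*j) * (-Real.sin t)^(2*K-(2*j)) * ((2*K).choose (2*j) : ℝ)) * m (2*j)
        + ((Real.cos t)^(2*j+1) * (-Real.sin t)^(2*K-(2*j+1)) * ((2*K).choose (2*j+1) : ℝ)) * m (2*j+1)
        = ((Real.cos t)^(2*j) * (-Real.sin t)^(2*K-(2*j)) * ((2*K).choose (2*j) : ℝ)) * m (2*j) := by
      intro j hj
      rw [hodd j (by simp at hj; omega)]
      ring
    rw [Finset.sum_congr rfl hzero] at h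
    have hf : ∀ j, j ≤ K →
        ((Real.cos t)^(2*j) * (-Real.sin t)^(2*K-(2*j)) * ((2*K).choose (2*j) : ℝ)) * m (2*j)
        = (((2*K).choose (2*j) : ℝ) * m (2*j)) * (c^(2*j) * (1 - c^2)^(K-j)) := by
      intro j hj
      have hs : (-Real.sin t) ^ (2*K - 2*j) = (1 - c^2)^(K-j) := by
        rw [show 2*K - 2*j = 2*(K-j) by omega, pow_mul, neg_sq, Real.sin_sq, hcos]
      rw [hs, hcos]
      ring
    rw [← Finset.sum_range_succ
      (fun j => Real.cos t ^ (2*j) * (-Real.sin t) ^ (2*K - 2*j) * (((2*K).choose (2*j) : ℝ)) * m (2*j)) K] at h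
    rw [Finset.sum_congr rfl (fun j hj => hf j (by simp at hj; omega))] at h
    -- now turn into polynomial eval
    rw [hP]
    simp only [Polynomial.eval_sub, Polynomial.eval_finset_sum, Polynomial.eval_mul,
      Polynomial.eval_C, Polynomial.eval_pow, Polynomial.eval_X, Polynomial.eval_sub,
      Polynomial.eval_one]
    rw [h]
    ring
  have hP0 : P = 0 := by
    refine Polynomial.eq_zero_of_infinite_isRoot P (Set.Infinite.mono ?_ (Set.Icc_infinite (by norm_num : (-1:ℝ) < 1)))
    intro c hc
    exact hroot c hc
  -- derivative at 1
  have hder : Polynomial.eval 1 (Polynomial.derivative P) = 0 := by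
    rw [hP0]; simp
  have hterm : ∀ (a : ℝ) (p q : ℕ),
      Polynomial.eval 1 (Polynomial.derivative (Polynomial.C a * (X^p * (1 - X^2)^q)))
        = a * (p * (0:ℝ)^q + q * (0:ℝ)^(q-1) * (-2)) := by
    intro a p q
    simp [Polynomial.derivative_C_mul, Polynomial.derivative_mul, Polynomial.derivative_pow,
      Polynomial.derivative_X_pow]
  have hsum : Polynomial.eval 1 (Polynomial.derivative P)
      = ∑ j ∈ Finset.range (K+1), ((((2*K).choose (2*j) : ℝ)) * m (2*j)) *
          ((2*j : ℕ) * (0:ℝ)^(K-j) + ((K-j : ℕ)) * (0:ℝ)^(K-j-1) * (-2)) := by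
    rw [hP, Polynomial.derivative_sub, Polynomial.derivative_C, sub_zero,
      map_sum Polynomial.derivative _ _, Polynomial.eval_finset_sum]
    exact Finset.sum_congr rfl fun j _ => hterm _ _ _
  rw [hsum] at hder
  simp only [hKdef] at hder
  rw [Finset.sum_range_succ, Finset.sum_range_succ] at hder
  rw [Finset.sum_eq_zero (fun j hj => by
    have hj' : j < k := Finset.mem_range.1 hj
    rw [zero_pow (show k + 1 - j ≠ 0 by omega), zero_pow (show k + 1 - j - 1 ≠ 0 by omega)]
    ring)] at hder
  rw [show k + 1 - k = 1 by omega, show k + 1 - (k+1) = 0 by omega, Nat.choose_self] at hder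
  norm_num at hder
  -- hder should now be linear in m (2*k) and m (2*(k+1))
  have hchoose : (((2*(k+1)).choose (2*k) : ℕ) : ℝ) = ((k:ℝ)+1)*(2*(k:ℝ)+1) := by
    have h1 : (2*(k+1)).choose (2*k) = (2*(k+1)).choose 2 := by
      rw [show 2*k = 2*(k+1) - 2 by omega]
      exact Nat.choose_symm (by omega)
    have h2 : (2*(k+1)).choose 2 = (k+1)*(2*k+1) := by
      rw [Nat.choose_two_right, show 2*(k+1) = 2*((k+1)) by rfl]
      rw [show 2*(k+1) - 1 = 2*k+1 by omega, show 2*(k+1)*(2*k+1) = 2*((k+1)*(2*k+1)) by ring]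
      exact Nat.mul_div_cancel_left _ (by norm_num)
    rw [h1, h2]
    push_cast
    ring
  have hm2K : m (2*(k+1)) = aK := by
    simp only [hm, haK, hKdef, Nat.sub_self, pow_zero, mul_one]
  have hm2k : m (2*k) = ∫ n, (n 2)^(2*k) * (n 0)^2 ∂μ := by
    simp only [hm, hKdef]
    rw [show 2*(k+1) - 2*k = 2 by omega]
  rw [hchoose, hm2K, hm2k] at hder
  have hk1 : (0:ℝ) < (k:ℝ) + 1 := by positivity
  show aK = (2*(k:ℝ)+1) * ∫ n, (n 2)^(2*k) * (n 0)^2 ∂μ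
  nlinarith [hder]

lemma moment {μ : Measure (Fin 3 → ℝ)} (hμ : IsUniformSphereMeasure μ) (k : ℕ) :
    ∫ n, (n 2)^(2*k) ∂μ = 1/(2*(k:ℝ)+1) := by
  induction k with
  | zero =>
    have : IsProbabilityMeasure μ := hμ.1
    simp
  | succ k ih =>
    have hkey := key_relation hμ k
    have hswap := swap_eq hμ (2*k) 2
    have i1 := integrable_mon (μ := μ) hμ (2*k) 2 0
    have i2 := integrable_mon (μ := μ) hμ (2*k) 2 1
    have i3 : Integrable (fun n : Fin 3 → ℝ => (n 2)^(2*(k+1))) μ := by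
      simpa using integrable_mon (μ := μ) hμ (2*(k+1)) 0 0
    have h1 : ∫ n, (n 2)^(2*k) ∂μ
        = ∫ n, ((n 2)^(2*k) * (n 0)^2 + ((n 2)^(2*k) * (n 1)^2 + (n 2)^(2*(k+1)))) ∂μ := by
      apply integral_congr_ae
      filter_upwards [ae_sphere hμ] with n h
      rw [show 2*(k+1) = 2*k + 2 by ring, pow_add]
      linear_combination ((n 2)^(2*k)) * h.symm
    have e1 : ∫ n, ((n 2)^(2*k) * (n 0)^2 + ((n 2)^(2*k) * (n 1)^2 + (n 2)^(2*(k+1)))) ∂μ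
        = (∫ n, (n 2)^(2*k) * (n 0)^2 ∂μ)
          + ∫ n, ((n 2)^(2*k) * (n 1)^2 + (n 2)^(2*(k+1))) ∂μ := integral_add i1 (i2.add i3)
    have e2 : ∫ n, ((n 2)^(2*k) * (n 1)^2 + (n 2)^(2*(k+1))) ∂μ
        = (∫ n, (n 2)^(2*k) * (n 1)^2 ∂μ) + ∫ n, (n 2)^(2*(k+1)) ∂μ := integral_add i2 i3
    rw [e1, e2, hswap, ih] at h1
    set A := ∫ n, (n 2)^(2*(k+1)) ∂μ
    set B := ∫ n, (n 2)^(2*k) * (n 0)^2 ∂μ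
    have hpos : (2*(k:ℝ)+1) ≠ 0 := by positivity
    have hpos3 : (2*(k:ℝ)+3) ≠ 0 := by positivity
    rw [div_eq_iff hpos] at h1
    rw [hkey] at h1
    push_cast
    rw [hkey, eq_div_iff (by positivity : (2*((k:ℝ)+1)+1) ≠ 0)]
    linear_combination -h1

lemma Ibin_neg (x : ℝ) : Ibin (-x) = Ibin x := by
  unfold Ibin
  rw [show (1:ℝ) + -x = 1 - x by ring, show (1:ℝ) - -x = 1 + x by ring]
  ring

lemma Ibin_abs (x : ℝ) : Ibin |x| = Ibin x := by
  rcases abs_choice x with h | h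
  · rw [h]
  · rw [h, Ibin_neg]

lemma Ibin_eq_tsum {y : ℝ} (hy : |y| < 1) :
    Ibin y = ∑' m : ℕ, y ^ (2 * (m + 1)) / (((m:ℝ) + 1) * (2 * m + 1)) / (2 * Real.log 2) := by
  rw [((ibin_hasSum hy).div_const (2 * Real.log 2)).tsum_eq]
  unfold Ibin
  rw [Real.logb, Real.logb]
  ring

/-- Average RSP gain for the state `ρ⁰_2iso` with `E = κ·diag(0,0,1)`, for `0 < κ < 1`:
`∫ Ibin(κ|n₃|) dμ(n) = ((1+κ)²ln(1+κ) − (1−κ)²ln(1−κ) − 2κ)/(4κ ln 2)`. -/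
theorem stmt13 (μ : Measure (Fin 3 → ℝ)) (hμ : IsUniformSphereMeasure μ)
    (κ : ℝ) (hκ0 : 0 < κ) (hκ1 : κ < 1) :
    (∫ n, Ibin (κ * |n 2|) ∂μ) =
      ((1 + κ) ^ 2 * Real.log (1 + κ) - (1 - κ) ^ 2 * Real.log (1 - κ) - 2 * κ) /
        (4 * κ * Real.log 2) := by
  have hprob : IsProbabilityMeasure μ := hμ.1
  have hlog2 : (0:ℝ) < Real.log 2 := Real.log_pos (by norm_num)
  set g : ℕ → (Fin 3 → ℝ) → ℝ :=
    fun m n => (κ * n 2) ^ (2 * (m + 1)) / (((m:ℝ) + 1) * (2 * m + 1)) / (2 * Real.log 2) with hg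
  have hae : ∀ᵐ n ∂μ, Ibin (κ * |n 2|) = ∑' m, g m n := by
    filter_upwards [ae_bound hμ] with n hn
    have habs : |κ * n 2| < 1 := by
      rw [abs_mul, abs_of_pos hκ0]
      calc κ * |n 2| ≤ κ * 1 := by gcongr; exact hn.2.2
        _ < 1 := by linarith
    have h1 : Ibin (κ * |n 2|) = Ibin (κ * n 2) := by
      rcases abs_choice (n 2) with h | h
      · rw [h]
      · rw [h, show κ * -(n 2) = -(κ * n 2) by ring, Ibin_neg]
    rw [h1, Ibin_eq_tsum habs]
  rw [integral_congr_ae hae]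
  have hmeas : ∀ m, AEStronglyMeasurable (g m) μ := by
    intro m
    have hm : Measurable (fun n : Fin 3 → ℝ =>
        (κ * n 2) ^ (2 * (m + 1)) / (((m:ℝ) + 1) * (2 * m + 1)) / (2 * Real.log 2)) :=
      ((((measurable_pi_apply (2 : Fin 3) : Measurable fun n : Fin 3 → ℝ => n 2).const_mul κ).pow_const _).div_const _).div_const _
    exact hm.aestronglyMeasurable
  have hκ2 : κ^2 < 1 := by nlinarith
  have hsummable : Summable (fun m : ℕ => κ ^ (2*(m+1))) := by
    refine ((summable_geometric_of_lt_one (by positivity : (0:ℝ) ≤ κ^2) hκ2).mul_left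
      (κ^2)).congr fun m => ?_
    rw [pow_mul]
    exact (pow_succ' _ _).symm
  have hb : ∀ m : ℕ, ∫⁻ n, ‖g m n‖₊ ∂μ ≤ ENNReal.ofReal (κ ^ (2*(m+1))) := by
    intro m
    have hub : ∀ᵐ n ∂μ, (‖g m n‖₊ : ENNReal) ≤ ENNReal.ofReal (κ ^ (2*(m+1))) := by
      filter_upwards [ae_bound hμ] with n hn
      rw [← enorm_eq_nnnorm, ← ofReal_norm]
      apply ENNReal.ofReal_le_ofReal
      have h1 : |κ * n 2| ≤ κ := by
        rw [abs_mul, abs_of_pos hκ0]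
        calc κ * |n 2| ≤ κ * 1 := by gcongr; exact hn.2.2
          _ = κ := mul_one κ
      have hden1 : (1:ℝ) ≤ ((m:ℝ)+1) * (2*m+1) := by
        nlinarith [Nat.cast_nonneg (α := ℝ) m]
      have hden2 : (1:ℝ) ≤ 2 * Real.log 2 := by
        have := Real.log_two_gt_d9; linarith
      have e1 : |(κ * n 2) ^ (2*(m+1))| ≤ κ ^ (2*(m+1)) := by
        rw [abs_pow]
        exact pow_le_pow_left₀ (abs_nonneg _) h1 _
      rw [hg]
      simp only [Real.norm_eq_abs]
      rw [abs_div, abs_div, abs_of_pos (by positivity : (0:ℝ) < ((m:ℝ)+1)*(2*m+1)),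
        abs_of_pos (by positivity : (0:ℝ) < 2 * Real.log 2)]
      calc |(κ * n 2) ^ (2*(m+1))| / (((m:ℝ)+1)*(2*m+1)) / (2*Real.log 2)
          ≤ |(κ * n 2) ^ (2*(m+1))| / 1 / 1 := by gcongr <;> positivity
        _ = |(κ * n 2) ^ (2*(m+1))| := by rw [div_one, div_one]
        _ ≤ κ ^ (2*(m+1)) := e1
    calc ∫⁻ n, ‖g m n‖₊ ∂μ ≤ ∫⁻ _, ENNReal.ofReal (κ ^ (2*(m+1))) ∂μ := lintegral_mono_ae hub
      _ = ENNReal.ofReal (κ ^ (2*(m+1))) := by rw [lintegral_const, measure_univ, mul_one]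
  have hlint : ∑' m, ∫⁻ n, ‖g m n‖₊ ∂μ ≠ ⊤ := by
    refine ne_top_of_le_ne_top (ENNReal.ofReal_ne_top (r := ∑' m, κ ^ (2*(m+1))))
      (le_trans (ENNReal.tsum_le_tsum hb) (le_of_eq ?_))
    exact (ENNReal.ofReal_tsum_of_nonneg (fun m => by positivity) hsummable).symm
  rw [integral_tsum hmeas hlint]
  have hint : ∀ m : ℕ, ∫ n, g m n ∂μ
      = κ ^ (2*(m+1)) / (((m:ℝ)+1) * (2*(m:ℝ)+1) * (2*(m:ℝ)+3)) / (2*Real.log 2) := by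
    intro m
    rw [hg]
    simp only
    simp_rw [mul_pow]
    rw [integral_div, integral_div, integral_const_mul, moment hμ (m+1)]
    have d1 : ((m:ℝ)+1) ≠ 0 := by positivity
    have d2 : (2*(m:ℝ)+1) ≠ 0 := by positivity
    have d3 : (2*(m:ℝ)+3) ≠ 0 := by positivity
    have d4 : (2*Real.log 2) ≠ 0 := by positivity
    push_cast
    field_simp
    ring
  rw [tsum_congr hint]
  have hval := (series_value hκ0 hκ1).div_const (2 * Real.log 2)
  rw [hval.tsum_eq, div_div]
  congr 1
  ring
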